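/- Greedy algorithm correctness for single-block placement: for each step i of the greedy algorithm (which starts with P_0 = ∅ and at each step adds to the current partial placement the leaf u minimizing f⃗(P ∪ {u}) lexicographically), there exists an optimal placement P* of size ρ (one lexico-minimizing f⃗ among all size-ρ subsets of leaves) such that P_i ⊆ P*. -/
import Mathlib


attribute [local instance] Classical.propDecidable

/-- `v` is a descendant of `u` in the rooted tree given by the `parent` map
(every vertex is a descendant of itself). -/
def isDesc {n : ℕ} (parent : Fin n → Fin n) (u v : Fin n) : Prop :=
  ∃ k : ℕ, parent^[k] v = u

/-- `v` is a leaf: no other vertex has `v` as its parent. -/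
def isLeaf {n : ℕ} (parent : Fin n → Fin n) (v : Fin n) : Prop :=
  ∀ w, parent w = v → w = v

/-- The set of leaves of the tree. -/
noncomputable def leaves {n : ℕ} (parent : Fin n → Fin n) : Finset (Fin n) :=
  Finset.univ.filter (isLeaf parent)

/-- The set `C_u` of leaf descendants of vertex `u`. -/
noncomputable def leafDesc {n : ℕ} (parent : Fin n → Fin n) (u : Fin n) : Finset (Fin n) :=
  Finset.univ.filter (fun v => isDesc parent u v ∧ isLeaf parent v)

/-- The failure number `f(u, P) = |P ∩ C_u|`. -/
noncomputable def fnum {n : ℕ} (parent : Fin n → Fin n) (u : Fin n) (P : Finset (Fin n)) : ℕ :=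
  (P ∩ leafDesc parent u).card

/-- `c` is a child of `u`. -/
def isChild {n : ℕ} (parent : Fin n → Fin n) (c u : Fin n) : Prop :=
  parent c = u ∧ c ≠ u

/-- The failure aggregate `f⃗(P) ∈ ℕ^{ρ+1}`: entry `i` counts the vertices with
failure number `ρ - i`. -/
noncomputable def fagg {n : ℕ} (parent : Fin n → Fin n) (ρ : ℕ) (P : Finset (Fin n)) :
    Fin (ρ + 1) → ℕ :=
  fun i => (Finset.univ.filter (fun v : Fin n => fnum parent v P = ρ - (i : ℕ))).card

/-- Lexicographic order on `ℕ`-vectors. -/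
def lexLe {d : ℕ} (x y : Fin d → ℕ) : Prop :=
  x = y ∨ ∃ j : Fin d, x j < y j ∧ ∀ i : Fin d, i < j → x i = y i

/-- Strict lexicographic order on `ℕ`-vectors. -/
def lexLt {d : ℕ} (x y : Fin d → ℕ) : Prop :=
  ∃ j : Fin d, x j < y j ∧ ∀ i : Fin d, i < j → x i = y i

section TreeAux
variable {n : ℕ} (parent : Fin n → Fin n)

lemma isDesc_refl (u : Fin n) : isDesc parent u u := ⟨0, rfl⟩

lemma isDesc_trans {x y z : Fin n} (h1 : isDesc parent x y) (h2 : isDesc parent y z) :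
    isDesc parent x z := by
  obtain ⟨k, hk⟩ := h1; obtain ⟨l, hl⟩ := h2
  exact ⟨k + l, by rw [Function.iterate_add_apply, hl, hk]⟩

lemma mem_leaves_iff {u : Fin n} : u ∈ leaves parent ↔ isLeaf parent u := by simp [leaves]

lemma mem_leafDesc_iff {x v : Fin n} :
    v ∈ leafDesc parent x ↔ isDesc parent x v ∧ isLeaf parent v := by simp [leafDesc]

variable {P : Finset (Fin n)} {x u v : Fin n}

lemma fnum_insert_of_desc (hL : isLeaf parent u) (hd : isDesc parent x u) (hu : u ∉ P) :
    fnum parent x (insert u P) = fnum parent x P + 1 := by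
  unfold fnum
  rw [Finset.insert_inter_of_mem ((mem_leafDesc_iff parent).2 ⟨hd, hL⟩)]
  exact Finset.card_insert_of_notMem (fun h => hu (Finset.mem_inter.1 h).1)

lemma fnum_insert_of_not_desc (hd : ¬ isDesc parent x u) :
    fnum parent x (insert u P) = fnum parent x P := by
  unfold fnum
  rw [Finset.insert_inter_of_notMem (fun h => hd ((mem_leafDesc_iff parent).1 h).1)]

lemma fnum_erase_of_desc (hL : isLeaf parent v) (hd : isDesc parent x v) (hv : v ∈ P) :
    fnum parent x (P.erase v) + 1 = fnum parent x P := by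
  unfold fnum
  have h1 : (P.erase v) ∩ leafDesc parent x = (P ∩ leafDesc parent x).erase v := by
    ext w
    simp only [Finset.mem_inter, Finset.mem_erase]
    tauto
  rw [h1, Finset.card_erase_add_one
    (Finset.mem_inter.2 ⟨hv, (mem_leafDesc_iff parent).2 ⟨hd, hL⟩⟩)]

lemma fnum_erase_of_not_desc (hd : ¬ isDesc parent x v) :
    fnum parent x (P.erase v) = fnum parent x P := by
  unfold fnum
  congr 1
  ext w
  simp only [Finset.mem_inter, Finset.mem_erase]
  constructor
  · rintro ⟨⟨_, hw⟩, hd2⟩; exact ⟨hw, hd2⟩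
  · rintro ⟨hw, hd2⟩
    exact ⟨⟨fun h => hd (h ▸ ((mem_leafDesc_iff parent).1 hd2).1), hw⟩, hd2⟩

lemma fnum_le_card (R : Finset (Fin n)) : fnum parent x R ≤ R.card :=
  Finset.card_le_card Finset.inter_subset_left

lemma fnum_congr_of {P' : Finset (Fin n)} (hPP' : P ⊆ P')
    (h : ∀ w ∈ P', w ∉ P → w ∉ leafDesc parent x) :
    fnum parent x P' = fnum parent x P := by
  unfold fnum
  congr 1
  apply Finset.Subset.antisymm
  · intro w hw
    obtain ⟨hw1, hw2⟩ := Finset.mem_inter.1 hw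
    by_cases hwP : w ∈ P
    · exact Finset.mem_inter.2 ⟨hwP, hw2⟩
    · exact absurd hw2 (h w hw1 hwP)
  · exact Finset.inter_subset_inter hPP' (Finset.Subset.refl _)

lemma fnum_succ_le_of {P' : Finset (Fin n)} (hPP' : P ⊆ P') (hv : v ∈ P') (hvP : v ∉ P)
    (hvD : v ∈ leafDesc parent x) : fnum parent x P + 1 ≤ fnum parent x P' := by
  have hsub : insert v (P ∩ leafDesc parent x) ⊆ P' ∩ leafDesc parent x :=
    Finset.insert_subset (Finset.mem_inter.2 ⟨hv, hvD⟩)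
      (Finset.inter_subset_inter hPP' (Finset.Subset.refl _))
  have hcard := Finset.card_le_card hsub
  rw [Finset.card_insert_of_notMem (fun h => hvP (Finset.mem_inter.1 h).1)] at hcard
  exact hcard

end TreeAux

section Cnt
variable {n : ℕ} (parent : Fin n → Fin n)

noncomputable def cntGe (s R : Finset (Fin n)) (t : ℕ) : ℕ :=
  (s.filter (fun x => t ≤ fnum parent x R)).card

noncomputable def cntEq (s R : Finset (Fin n)) (t : ℕ) : ℕ :=
  (s.filter (fun x => fnum parent x R = t)).card

lemma cntGe_rec (s R : Finset (Fin n)) (t : ℕ) :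
    cntGe parent s R t = cntGe parent s R (t + 1) + cntEq parent s R t := by
  unfold cntGe cntEq
  have h1 : s.filter (fun x => t ≤ fnum parent x R)
      = s.filter (fun x => t + 1 ≤ fnum parent x R ∨ fnum parent x R = t) := by
    apply Finset.filter_congr
    intro x _
    constructor
    · intro h; omega
    · intro h; omega
  rw [h1, Finset.filter_or, Finset.card_union_of_disjoint]
  rw [Finset.disjoint_left]
  intro a ha hb
  simp only [Finset.mem_filter] at ha hb
  omega

lemma cntGe_zero (s R : Finset (Fin n)) : cntGe parent s R 0 = s.card := by
  unfold cntGe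
  rw [Finset.filter_true_of_mem (fun x _ => Nat.zero_le _)]

lemma cntGe_vanish {ρ : ℕ} (s : Finset (Fin n)) {R : Finset (Fin n)} (hR : R.card ≤ ρ)
    {t : ℕ} (ht : ρ < t) : cntGe parent s R t = 0 := by
  unfold cntGe
  rw [Finset.card_eq_zero, Finset.filter_eq_empty_iff]
  intro x _
  have := fnum_le_card parent (x := x) R
  omega

lemma cntEq_vanish {ρ : ℕ} (s : Finset (Fin n)) {R : Finset (Fin n)} (hR : R.card ≤ ρ)
    {t : ℕ} (ht : ρ < t) : cntEq parent s R t = 0 := by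
  unfold cntEq
  rw [Finset.card_eq_zero, Finset.filter_eq_empty_iff]
  intro x _
  have := fnum_le_card parent (x := x) R
  omega

lemma cntGe_split (s R : Finset (Fin n)) (p : Fin n → Prop) (t : ℕ) :
    cntGe parent s R t
      = cntGe parent (s.filter p) R t + cntGe parent (s.filter (fun x => ¬ p x)) R t := by
  unfold cntGe
  rw [Finset.filter_filter, Finset.filter_filter, ← Finset.card_union_of_disjoint, ← Finset.filter_or]
  · apply congrArg
    apply Finset.filter_congr
    intro x _
    tauto
  · rw [Finset.disjoint_left]
    intro a ha hb
    simp only [Finset.mem_filter] at ha hb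
    tauto

lemma cntGe_split2 (s s₁ s₂ R : Finset (Fin n)) (hcov : ∀ x, x ∈ s ↔ x ∈ s₁ ∨ x ∈ s₂)
    (hdis : ∀ x, x ∈ s₁ → x ∈ s₂ → False) (t : ℕ) :
    cntGe parent s R t = cntGe parent s₁ R t + cntGe parent s₂ R t := by
  unfold cntGe
  have hd : Disjoint (s₁.filter (fun x => t ≤ fnum parent x R))
      (s₂.filter (fun x => t ≤ fnum parent x R)) := by
    rw [Finset.disjoint_left]
    intro a ha hb
    exact hdis a (Finset.mem_filter.1 ha).1 (Finset.mem_filter.1 hb).1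
  rw [← Finset.card_union_of_disjoint hd]
  congr 1
  ext x
  simp only [Finset.mem_filter, Finset.mem_union]
  constructor
  · rintro ⟨hx, hf⟩
    rcases (hcov x).1 hx with h | h
    · exact Or.inl ⟨h, hf⟩
    · exact Or.inr ⟨h, hf⟩
  · rintro (⟨hx, hf⟩ | ⟨hx, hf⟩)
    · exact ⟨(hcov x).2 (Or.inl hx), hf⟩
    · exact ⟨(hcov x).2 (Or.inr hx), hf⟩

lemma cntGe_split3 (s₁ s₂ s₃ R : Finset (Fin n)) (hcov : ∀ x : Fin n, x ∈ s₁ ∨ x ∈ s₂ ∨ x ∈ s₃)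
    (h12 : ∀ x, x ∈ s₁ → x ∈ s₂ → False) (h13 : ∀ x, x ∈ s₁ → x ∈ s₃ → False)
    (h23 : ∀ x, x ∈ s₂ → x ∈ s₃ → False) (t : ℕ) :
    cntGe parent Finset.univ R t
      = cntGe parent s₁ R t + cntGe parent s₂ R t + cntGe parent s₃ R t := by
  unfold cntGe
  have hd12 : Disjoint (s₁.filter (fun x => t ≤ fnum parent x R))
      (s₂.filter (fun x => t ≤ fnum parent x R)) := by
    rw [Finset.disjoint_left]
    intro a ha hb
    exact h12 a (Finset.mem_filter.1 ha).1 (Finset.mem_filter.1 hb).1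
  have hd123 : Disjoint
      (s₁.filter (fun x => t ≤ fnum parent x R) ∪ s₂.filter (fun x => t ≤ fnum parent x R))
      (s₃.filter (fun x => t ≤ fnum parent x R)) := by
    rw [Finset.disjoint_left]
    intro a ha hb
    rcases Finset.mem_union.1 ha with h | h
    · exact h13 a (Finset.mem_filter.1 h).1 (Finset.mem_filter.1 hb).1
    · exact h23 a (Finset.mem_filter.1 h).1 (Finset.mem_filter.1 hb).1
  rw [← Finset.card_union_of_disjoint hd12, ← Finset.card_union_of_disjoint hd123]
  congr 1
  ext x
  simp only [Finset.mem_filter, Finset.mem_union, Finset.mem_univ, true_and]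
  constructor
  · intro hf
    rcases hcov x with h | h | h
    · exact Or.inl (Or.inl ⟨h, hf⟩)
    · exact Or.inl (Or.inr ⟨h, hf⟩)
    · exact Or.inr ⟨h, hf⟩
  · rintro ((⟨_, hf⟩ | ⟨_, hf⟩) | ⟨_, hf⟩) <;> exact hf

lemma cntGe_eq_of {s R R' : Finset (Fin n)} {t t' : ℕ}
    (h : ∀ x ∈ s, (t ≤ fnum parent x R ↔ t' ≤ fnum parent x R')) :
    cntGe parent s R t = cntGe parent s R' t' := by
  unfold cntGe
  congr 1
  exact Finset.filter_congr h

lemma cntGe_le_of {s R R' : Finset (Fin n)} {t t' : ℕ}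
    (h : ∀ x ∈ s, t ≤ fnum parent x R → t' ≤ fnum parent x R') :
    cntGe parent s R t ≤ cntGe parent s R' t' := by
  unfold cntGe
  apply Finset.card_le_card
  intro x hx
  simp only [Finset.mem_filter] at hx ⊢
  exact ⟨hx.1, h x hx.1 hx.2⟩

end Cnt

section TopLe

def topLe (f g : ℕ → ℕ) : Prop :=
  (∀ t, f t = g t) ∨ ∃ t, f t < g t ∧ ∀ s, t < s → f s = g s

lemma exists_maxdiff {f g : ℕ → ℕ} (T : ℕ) (hT : ∀ t, T ≤ t → f t = g t) {t₀ : ℕ}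
    (h0 : f t₀ ≠ g t₀) : ∃ t, f t ≠ g t ∧ ∀ s, t < s → f s = g s := by
  classical
  set D := (Finset.range T).filter (fun t => f t ≠ g t) with hD
  have ht₀ : t₀ ∈ D := by
    rw [hD, Finset.mem_filter, Finset.mem_range]
    refine ⟨?_, h0⟩
    by_contra h
    exact h0 (hT _ (by omega))
  have hne : D.Nonempty := ⟨t₀, ht₀⟩
  refine ⟨D.max' hne, (Finset.mem_filter.1 (D.max'_mem hne)).2, ?_⟩
  intro s hs
  by_contra hsne
  have hsD : s ∈ D := by
    rw [hD, Finset.mem_filter, Finset.mem_range]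
    refine ⟨?_, hsne⟩
    by_contra h
    exact hsne (hT _ (by omega))
  have := Finset.le_max' D s hsD
  omega

lemma topLe_exchange {α β γ : ℕ → ℕ} (hβγ : ∀ t, β t ≤ γ (t + 1)) (hαβ : topLe α β) (T : ℕ)
    (hT : ∀ t, T ≤ t → α t = 0 ∧ γ t = 0) : topLe α (fun t => γ (t + 1)) := by
  have hvan : ∀ t, T ≤ t → α t = γ (t + 1) := by
    intro t ht
    rw [(hT t ht).1, (hT (t + 1) (by omega)).2]
  rcases hαβ with heq | ⟨s, hs, habove⟩
  · have hle : ∀ t, α t ≤ γ (t + 1) := fun t => (heq t) ▸ hβγ t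
    by_cases hall : ∀ t, α t = γ (t + 1)
    · exact Or.inl hall
    · push_neg at hall
      obtain ⟨t₀, ht₀⟩ := hall
      obtain ⟨t, htne, htab⟩ := exists_maxdiff T hvan ht₀
      exact Or.inr ⟨t, lt_of_le_of_ne (hle t) htne, htab⟩
  · have hle : ∀ t, s ≤ t → α t ≤ γ (t + 1) := by
      intro t ht
      rcases eq_or_lt_of_le ht with rfl | h
      · exact le_trans (le_of_lt hs) (hβγ _)
      · rw [habove t h]; exact hβγ t
    have hsne : α s ≠ γ (s + 1) := ne_of_lt (lt_of_lt_of_le hs (hβγ s))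
    obtain ⟨t, htne, htab⟩ := exists_maxdiff T hvan hsne
    have hst : s ≤ t := by
      by_contra h
      exact hsne (htab s (by omega))
    exact Or.inr ⟨t, lt_of_le_of_ne (hle t hst) htne, htab⟩

section Cum
variable {F G f g : ℕ → ℕ} (hF : ∀ t, F t = F (t + 1) + f t) (hG : ∀ t, G t = G (t + 1) + g t)
  (T : ℕ) (hFT : F T = 0) (hGT : G T = 0)

include hF hG hFT hGT in
lemma cum_key : ∀ t, (∀ s, t ≤ s → f s = g s) → ∀ s, t ≤ s → F s = G s := by
  have hFz : ∀ s, T ≤ s → F s = 0 := by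
    intro s hs
    induction s, hs using Nat.le_induction with
    | base => exact hFT
    | succ s hs ih => have := hF s; omega
  have hGz : ∀ s, T ≤ s → G s = 0 := by
    intro s hs
    induction s, hs using Nat.le_induction with
    | base => exact hGT
    | succ s hs ih => have := hG s; omega
  intro t hfg
  have main : ∀ d s, t ≤ s → T ≤ s + d → F s = G s := by
    intro d
    induction d with
    | zero =>
      intro s hts hT'
      rw [hFz s (by omega), hGz s (by omega)]
    | succ d ih =>
      intro s hts hT'
      rcases Nat.lt_or_ge (s + d) T with h | h
      · have h1 := ih (s + 1) (by omega) (by omega)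
        have h2 := hF s
        have h3 := hG s
        have h4 := hfg s hts
        omega
      · exact ih s hts h
  intro s hs
  exact main T s hs (by omega)

include hF hG hFT hGT in
lemma topLe_cum (h : topLe f g) : topLe F G := by
  rcases h with heq | ⟨t, ht, hab⟩
  · exact Or.inl fun s =>
      cum_key hF hG T hFT hGT 0 (fun s _ => heq s) s (Nat.zero_le _)
  · right
    have hup : ∀ s, t + 1 ≤ s → F s = G s :=
      cum_key hF hG T hFT hGT (t + 1) (fun s hs => hab s (by omega))
    refine ⟨t, ?_, fun s hs => hup s (by omega)⟩
    have h1 := hF t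
    have h2 := hG t
    have h3 := hup (t + 1) (le_refl _)
    omega

include hF hG in
lemma topLe_of_cum (h : topLe F G) : topLe f g := by
  rcases h with heq | ⟨t, ht, hab⟩
  · left
    intro s
    have h1 := hF s
    have h2 := hG s
    have h3 := heq s
    have h4 := heq (s + 1)
    omega
  · right
    refine ⟨t, ?_, ?_⟩
    · have h1 := hF t
      have h2 := hG t
      have h3 : F (t + 1) = G (t + 1) := hab _ (by omega)
      omega
    · intro s hs
      have h1 := hF s
      have h2 := hG s
      have h3 := hab s (by omega)
      have h4 := hab (s + 1) (by omega)
      omega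

end Cum

lemma topLe_ptwise_of {X Y f g : ℕ → ℕ} (hid : ∀ t, X (t + 1) + g t = Y (t + 1) + f t)
    (h0 : X 0 = Y 0) (h : topLe X Y) : topLe f g := by
  rcases h with heq | ⟨t, ht, hab⟩
  · left
    intro s
    have h1 := hid s
    have h2 := heq (s + 1)
    omega
  · right
    match t, ht with
    | 0, ht => omega
    | (s+1), ht =>
      refine ⟨s, by have := hid s; omega, ?_⟩
      intro w hw
      have h1 := hid w
      have h2 := hab (w + 1) (by omega)
      omega

lemma topLe_ptwise {X Y f g : ℕ → ℕ} (hid : ∀ t, X (t + 1) + g t = Y (t + 1) + f t)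
    (h0 : X 0 = Y 0) (h : topLe f g) : topLe X Y := by
  rcases h with heq | ⟨s, hs, hab⟩
  · left
    intro t
    match t with
    | 0 => exact h0
    | (w+1) => have h1 := hid w; have h2 := heq w; omega
  · right
    refine ⟨s + 1, by have := hid s; omega, ?_⟩
    intro w hw
    match w, hw with
    | (w+1), hw =>
      have h1 := hid w
      have h2 := hab w (by omega)
      omega

end TopLe

section Conv
variable {n : ℕ} (parent : Fin n → Fin n) {ρ : ℕ}

lemma fagg_eq (R : Finset (Fin n)) (j : Fin (ρ + 1)) :
    fagg parent ρ R j = cntEq parent Finset.univ R (ρ - (j : ℕ)) := rfl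

lemma lex_iff_topEq {R R' : Finset (Fin n)} (hR : R.card ≤ ρ) (hR' : R'.card ≤ ρ) :
    lexLe (fagg parent ρ R) (fagg parent ρ R') ↔
      topLe (fun t => cntEq parent Finset.univ R t) (fun t => cntEq parent Finset.univ R' t) := by
  constructor
  · rintro (heq | ⟨j, hj, hab⟩)
    · left
      intro t
      show cntEq parent Finset.univ R t = cntEq parent Finset.univ R' t
      by_cases htρ : t ≤ ρ
      · have h1 : cntEq parent Finset.univ R (ρ - (ρ - t))
            = cntEq parent Finset.univ R' (ρ - (ρ - t)) :=
          congrFun heq ⟨ρ - t, by omega⟩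
        rwa [show ρ - (ρ - t) = t from by omega] at h1
      · rw [cntEq_vanish parent Finset.univ hR (show ρ < t by omega),
          cntEq_vanish parent Finset.univ hR' (show ρ < t by omega)]
    · right
      refine ⟨ρ - (j : ℕ), hj, ?_⟩
      intro s hs
      show cntEq parent Finset.univ R s = cntEq parent Finset.univ R' s
      by_cases hsρ : s ≤ ρ
      · have hjρ : (j : ℕ) ≤ ρ := by omega
        have hlt : (⟨ρ - s, by omega⟩ : Fin (ρ + 1)) < j := by
          rw [Fin.lt_def]
          show ρ - s < (j : ℕ)
          omega
        have h1 : cntEq parent Finset.univ R (ρ - (ρ - s))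
            = cntEq parent Finset.univ R' (ρ - (ρ - s)) := hab _ hlt
        rwa [show ρ - (ρ - s) = s from by omega] at h1
      · rw [cntEq_vanish parent Finset.univ hR (show ρ < s by omega),
          cntEq_vanish parent Finset.univ hR' (show ρ < s by omega)]
  · rintro (heq | ⟨t, ht, hab⟩)
    · left
      funext j
      exact heq (ρ - (j : ℕ))
    · right
      have ht' : cntEq parent Finset.univ R t < cntEq parent Finset.univ R' t := ht
      have htρ : t ≤ ρ := by
        by_contra h
        rw [cntEq_vanish parent Finset.univ hR' (show ρ < t by omega)] at ht'
        omega
      refine ⟨⟨ρ - t, by omega⟩, ?_, ?_⟩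
      · show cntEq parent Finset.univ R (ρ - (ρ - t)) < cntEq parent Finset.univ R' (ρ - (ρ - t))
        rwa [show ρ - (ρ - t) = t from by omega]
      · intro i hi
        rw [Fin.lt_def] at hi
        have hi' : (i : ℕ) < ρ - t := hi
        show cntEq parent Finset.univ R (ρ - (i : ℕ)) = cntEq parent Finset.univ R' (ρ - (i : ℕ))
        apply hab
        have := i.isLt
        omega

lemma lex_iff_topGe {R R' : Finset (Fin n)} (hR : R.card ≤ ρ) (hR' : R'.card ≤ ρ) :
    lexLe (fagg parent ρ R) (fagg parent ρ R') ↔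
      topLe (fun t => cntGe parent Finset.univ R t) (fun t => cntGe parent Finset.univ R' t) := by
  rw [lex_iff_topEq parent hR hR']
  constructor
  · exact topLe_cum (fun t => cntGe_rec parent _ _ t) (fun t => cntGe_rec parent _ _ t)
      (ρ + 1) (cntGe_vanish parent _ hR (by omega)) (cntGe_vanish parent _ hR' (by omega))
  · exact topLe_of_cum (fun t => cntGe_rec parent _ _ t) (fun t => cntGe_rec parent _ _ t)

end Conv

section LexBasic
variable {d : ℕ}

lemma lexLe_total (x y : Fin d → ℕ) : lexLe x y ∨ lexLe y x := by
  classical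
  by_cases h : x = y
  · exact Or.inl (Or.inl h)
  · have hne : ∃ j, x j ≠ y j := by
      by_contra hc
      push_neg at hc
      exact h (funext hc)
    set D := Finset.univ.filter (fun j => x j ≠ y j) with hD
    have hDne : D.Nonempty := by
      obtain ⟨j, hj⟩ := hne
      exact ⟨j, by simp [hD, hj]⟩
    set j₀ := D.min' hDne with hj₀
    have hbelow : ∀ i, i < j₀ → x i = y i := by
      intro i hi
      by_contra hc
      have : i ∈ D := by simp [hD, hc]
      have := Finset.min'_le D i this
      exact absurd (lt_of_lt_of_le hi this) (lt_irrefl _)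
    have hj₀ne : x j₀ ≠ y j₀ := (Finset.mem_filter.1 (D.min'_mem hDne)).2
    rcases lt_or_gt_of_ne hj₀ne with h1 | h1
    · exact Or.inl (Or.inr ⟨j₀, h1, hbelow⟩)
    · exact Or.inr (Or.inr ⟨j₀, h1, fun i hi => (hbelow i hi).symm⟩)

lemma lexLe_trans {x y z : Fin d → ℕ} (h1 : lexLe x y) (h2 : lexLe y z) : lexLe x z := by
  rcases h1 with rfl | ⟨j1, hj1, hb1⟩
  · exact h2
  rcases h2 with rfl | ⟨j2, hj2, hb2⟩
  · exact Or.inr ⟨j1, hj1, hb1⟩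
  rcases lt_trichotomy j1 j2 with h | rfl | h
  · exact Or.inr ⟨j1, by rw [← hb2 j1 h]; exact hj1, fun i hi => (hb1 i hi).trans (hb2 i (hi.trans h))⟩
  · exact Or.inr ⟨j1, hj1.trans hj2, fun i hi => (hb1 i hi).trans (hb2 i hi)⟩
  · exact Or.inr ⟨j2, by rw [hb1 j2 h]; exact hj2, fun i hi => (hb1 i (hi.trans h)).trans (hb2 i hi)⟩

lemma exists_lex_min {β : Type*} (S : Finset β) (hS : S.Nonempty) (f : β → (Fin d → ℕ)) :
    ∃ m ∈ S, ∀ q ∈ S, lexLe (f m) (f q) := by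
  classical
  induction S using Finset.cons_induction with
  | empty => exact absurd hS (by simp)
  | cons a s ha ih =>
    by_cases hs : s.Nonempty
    · obtain ⟨m, hm, hmin⟩ := ih hs
      rcases lexLe_total (f a) (f m) with h | h
      · refine ⟨a, Finset.mem_cons_self _ _, ?_⟩
        intro q hq
        rcases Finset.mem_cons.1 hq with rfl | hq
        · exact Or.inl rfl
        · exact lexLe_trans h (hmin q hq)
      · refine ⟨m, Finset.mem_cons.2 (Or.inr hm), ?_⟩
        intro q hq
        rcases Finset.mem_cons.1 hq with rfl | hq
        · exact h
        · exact hmin q hq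
    · rw [Finset.not_nonempty_iff_eq_empty] at hs
      subst hs
      refine ⟨a, Finset.mem_cons_self _ _, ?_⟩
      intro q hq
      rcases Finset.mem_cons.1 hq with rfl | hq
      · exact Or.inl rfl
      · exact absurd hq (by simp)

end LexBasic


set_option maxHeartbeats 2000000 in
/-- Greedy algorithm correctness: every partial placement produced by the greedy
algorithm (which at each step adds the leaf lexico-minimizing the resulting
failure aggregate) is contained in some optimal placement of size `ρ`. -/
theorem greedy_correct {n ρ : ℕ} (parent : Fin n → Fin n)
    (r : Fin n) (hroot : parent r = r) (hreach : ∀ v, isDesc parent r v)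
    (hcap : ρ ≤ (leaves parent).card)
    (Pseq : ℕ → Finset (Fin n)) (h0 : Pseq 0 = ∅)
    (hstep : ∀ i, i < ρ → ∃ u ∈ leaves parent \ Pseq i,
      Pseq (i + 1) = insert u (Pseq i) ∧
      ∀ w ∈ leaves parent \ Pseq i,
        lexLe (fagg parent ρ (insert u (Pseq i))) (fagg parent ρ (insert w (Pseq i)))) :
    ∀ i, i ≤ ρ → ∃ Popt : Finset (Fin n),
      Popt ⊆ leaves parent ∧ Popt.card = ρ ∧
      (∀ Q : Finset (Fin n), Q ⊆ leaves parent → Q.card = ρ →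
        lexLe (fagg parent ρ Popt) (fagg parent ρ Q)) ∧
      Pseq i ⊆ Popt := by
  classical
  have hinv : ∀ i, i ≤ ρ → (Pseq i).card = i ∧ Pseq i ⊆ leaves parent := by
    intro i
    induction i with
    | zero =>
      intro _
      rw [h0]
      exact ⟨Finset.card_empty, Finset.empty_subset _⟩
    | succ i ih =>
      intro h
      obtain ⟨u, hu, hueq, _⟩ := hstep i (by omega)
      obtain ⟨hc, hsub⟩ := ih (by omega)
      rw [hueq]
      have hu1 : u ∈ leaves parent := (Finset.mem_sdiff.1 hu).1
      have hu2 : u ∉ Pseq i := (Finset.mem_sdiff.1 hu).2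
      exact ⟨by rw [Finset.card_insert_of_notMem hu2, hc], Finset.insert_subset hu1 hsub⟩
  intro i
  induction i with
  | zero =>
    intro _
    obtain ⟨Popt, hmem, hmin⟩ := exists_lex_min ((leaves parent).powersetCard ρ)
      (Finset.powersetCard_nonempty.2 hcap) (fagg parent ρ)
    rw [Finset.mem_powersetCard] at hmem
    exact ⟨Popt, hmem.1, hmem.2, fun Q hQ1 hQ2 => hmin Q (Finset.mem_powersetCard.2 ⟨hQ1, hQ2⟩),
      by rw [h0]; exact Finset.empty_subset _⟩
  | succ i ih =>
    intro hi1
    have hiρ : i < ρ := by omega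
    obtain ⟨Pstar, hPs_sub, hPs_card, hPs_opt, hPs_ss⟩ := ih (by omega)
    obtain ⟨u, humem, hueq, hgreedy⟩ := hstep i hiρ
    have hu_leaves : u ∈ leaves parent := (Finset.mem_sdiff.1 humem).1
    have hu_notP : u ∉ Pseq i := (Finset.mem_sdiff.1 humem).2
    by_cases huPs : u ∈ Pstar
    · exact ⟨Pstar, hPs_sub, hPs_card, hPs_opt,
        by rw [hueq]; exact Finset.insert_subset huPs hPs_ss⟩
    · have hPcard : (Pseq i).card = i := (hinv i (by omega)).1
      have hPsub : Pseq i ⊆ leaves parent := (hinv i (by omega)).2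
      have hu_leaf : isLeaf parent u := (mem_leaves_iff parent).1 hu_leaves
      have hex : ∃ k : ℕ, ∃ w, w ∈ Pstar ∧ w ∉ Pseq i ∧ isDesc parent (parent^[k] u) w := by
        have hv₀ : (Pstar \ Pseq i).Nonempty := by
          rw [Finset.sdiff_nonempty]
          intro h
          have := Finset.card_le_card h
          omega
        obtain ⟨v₀, hv₀m⟩ := hv₀
        obtain ⟨k, hk⟩ := hreach u
        exact ⟨k, v₀, (Finset.mem_sdiff.1 hv₀m).1, (Finset.mem_sdiff.1 hv₀m).2,
          by rw [hk]; exact hreach v₀⟩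
      obtain ⟨v, hvPs, hvP, hvdesc⟩ := Nat.find_spec hex
      have hv_leaves : v ∈ leaves parent := hPs_sub hvPs
      have hv_leaf : isLeaf parent v := (mem_leaves_iff parent).1 hv_leaves
      have hdeep : ∀ x : Fin n, isDesc parent x u → ¬ isDesc parent x v →
          fnum parent x Pstar = fnum parent x (Pseq i) := by
        intro x hxu hxv
        apply fnum_congr_of parent hPs_ss
        intro w hwPs hwP hwD
        obtain ⟨k, hk⟩ := hxu
        have hwdesc : isDesc parent x w := ((mem_leafDesc_iff parent).1 hwD).1
        have hk0 : Nat.find hex ≤ k := by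
          by_contra hlt
          push_neg at hlt
          exact Nat.find_min hex hlt ⟨w, hwPs, hwP, by rw [hk]; exact hwdesc⟩
        have hxw0 : isDesc parent x (parent^[Nat.find hex] u) :=
          ⟨k - Nat.find hex, by
            rw [← Function.iterate_add_apply, Nat.sub_add_cancel hk0, hk]⟩
        exact hxv (isDesc_trans parent hxw0 hvdesc)
      have huv : u ≠ v := fun h => huPs (h ▸ hvPs)
      have hQcard : (insert u (Pstar.erase v)).card = ρ := by
        rw [Finset.card_insert_of_notMem (fun h => huPs (Finset.mem_of_mem_erase h)),
          Finset.card_erase_of_mem hvPs, hPs_card]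
        omega
      have hQsub : insert u (Pstar.erase v) ⊆ leaves parent :=
        Finset.insert_subset hu_leaves ((Finset.erase_subset _ _).trans hPs_sub)
      have hPQ : Pseq (i + 1) ⊆ insert u (Pstar.erase v) := by
        rw [hueq]
        apply Finset.insert_subset_insert
        intro w hw
        exact Finset.mem_erase.2 ⟨fun h => hvP (h ▸ hw), hPs_ss hw⟩
      have hfU : ∀ x : Fin n, isDesc parent x u → ¬ isDesc parent x v →
          fnum parent x (insert u (Pstar.erase v)) = fnum parent x (Pseq i) + 1 ∧
            fnum parent x Pstar = fnum parent x (Pseq i) := by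
        intro x h1 h2
        have hdp := hdeep x h1 h2
        have he : fnum parent x (Pstar.erase v) = fnum parent x Pstar :=
          fnum_erase_of_not_desc parent h2
        have hins : fnum parent x (insert u (Pstar.erase v)) = fnum parent x (Pstar.erase v) + 1 :=
          fnum_insert_of_desc parent hu_leaf h1 (fun h => huPs (Finset.mem_of_mem_erase h))
        exact ⟨by rw [hins, he, hdp], hdp⟩
      have hfB : ∀ x : Fin n, isDesc parent x v → ¬ isDesc parent x u →
          fnum parent x (insert u (Pstar.erase v)) + 1 = fnum parent x Pstar ∧
            fnum parent x (Pseq i) + 1 ≤ fnum parent x Pstar := by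
        intro x h1 h2
        have he : fnum parent x (Pstar.erase v) + 1 = fnum parent x Pstar :=
          fnum_erase_of_desc parent hv_leaf h1 hvPs
        have hins : fnum parent x (insert u (Pstar.erase v)) = fnum parent x (Pstar.erase v) :=
          fnum_insert_of_not_desc parent h2
        refine ⟨by rw [hins]; exact he, ?_⟩
        exact fnum_succ_le_of parent hPs_ss hvPs hvP ((mem_leafDesc_iff parent).2 ⟨h1, hv_leaf⟩)
      have hfR : ∀ x : Fin n, (isDesc parent x u ↔ isDesc parent x v) →
          fnum parent x (insert u (Pstar.erase v)) = fnum parent x Pstar := by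
        intro x hiff
        by_cases hdu : isDesc parent x u
        · have hdv := hiff.1 hdu
          have he := fnum_erase_of_desc parent hv_leaf hdv hvPs
          have hins : fnum parent x (insert u (Pstar.erase v))
              = fnum parent x (Pstar.erase v) + 1 :=
            fnum_insert_of_desc parent hu_leaf hdu (fun h => huPs (Finset.mem_of_mem_erase h))
          omega
        · have hdv : ¬ isDesc parent x v := fun h => hdu (hiff.2 h)
          rw [fnum_insert_of_not_desc parent hdu, fnum_erase_of_not_desc parent hdv]
      -- greedy key identity
      have key_g : ∀ t, cntGe parent Finset.univ (insert u (Pseq i)) (t + 1)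
          + cntEq parent (Finset.univ.filter (fun x => isDesc parent x v ∧ ¬ isDesc parent x u)) (Pseq i) t
          = cntGe parent Finset.univ (insert v (Pseq i)) (t + 1)
          + cntEq parent (Finset.univ.filter (fun x => isDesc parent x u ∧ ¬ isDesc parent x v)) (Pseq i) t := by
        intro t
        have idu : ∀ w : Fin n, isLeaf parent w → w ∉ Pseq i →
            cntGe parent Finset.univ (insert w (Pseq i)) (t + 1)
              + cntGe parent (Finset.univ.filter (fun x => isDesc parent x w)) (Pseq i) (t + 1)
            = cntGe parent Finset.univ (Pseq i) (t + 1)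
              + cntGe parent (Finset.univ.filter (fun x => isDesc parent x w)) (Pseq i) t := by
          intro w hwl hwp
          have hsplit1 := cntGe_split2 parent Finset.univ
            (Finset.univ.filter (fun x => isDesc parent x w))
            (Finset.univ.filter (fun x => ¬ isDesc parent x w)) (insert w (Pseq i))
            (by intro x; simp only [Finset.mem_filter, Finset.mem_univ, true_and]; tauto)
            (by intro x hx hy
                exact (Finset.mem_filter.1 hy).2 (Finset.mem_filter.1 hx).2) (t + 1)
          have hsplit2 := cntGe_split2 parent Finset.univ
            (Finset.univ.filter (fun x => isDesc parent x w))
            (Finset.univ.filter (fun x => ¬ isDesc parent x w)) (Pseq i)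
            (by intro x; simp only [Finset.mem_filter, Finset.mem_univ, true_and]; tauto)
            (by intro x hx hy
                exact (Finset.mem_filter.1 hy).2 (Finset.mem_filter.1 hx).2) (t + 1)
          have h1 : cntGe parent (Finset.univ.filter (fun x => isDesc parent x w))
              (insert w (Pseq i)) (t + 1)
              = cntGe parent (Finset.univ.filter (fun x => isDesc parent x w)) (Pseq i) t := by
            apply cntGe_eq_of parent
            intro x hx
            rw [fnum_insert_of_desc parent hwl (Finset.mem_filter.1 hx).2 hwp]
            omega
          have h2 : cntGe parent (Finset.univ.filter (fun x => ¬ isDesc parent x w))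
              (insert w (Pseq i)) (t + 1)
              = cntGe parent (Finset.univ.filter (fun x => ¬ isDesc parent x w)) (Pseq i) (t + 1) := by
            apply cntGe_eq_of parent
            intro x hx
            rw [fnum_insert_of_not_desc parent (Finset.mem_filter.1 hx).2]
          omega
        have h1 := idu u hu_leaf hu_notP
        have h2 := idu v hv_leaf hvP
        have split_u : ∀ s : ℕ, cntGe parent (Finset.univ.filter (fun x => isDesc parent x u)) (Pseq i) s
            = cntGe parent (Finset.univ.filter (fun x => isDesc parent x u ∧ isDesc parent x v)) (Pseq i) s
              + cntGe parent (Finset.univ.filter (fun x => isDesc parent x u ∧ ¬ isDesc parent x v)) (Pseq i) s := by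
          intro s
          apply cntGe_split2 parent
          · intro x; simp only [Finset.mem_filter, Finset.mem_univ, true_and]; tauto
          · intro x hx hy
            simp only [Finset.mem_filter, Finset.mem_univ, true_and] at hx hy
            tauto
        have split_v : ∀ s : ℕ, cntGe parent (Finset.univ.filter (fun x => isDesc parent x v)) (Pseq i) s
            = cntGe parent (Finset.univ.filter (fun x => isDesc parent x u ∧ isDesc parent x v)) (Pseq i) s
              + cntGe parent (Finset.univ.filter (fun x => isDesc parent x v ∧ ¬ isDesc parent x u)) (Pseq i) s := by
          intro s
          apply cntGe_split2 parent
          · intro x; simp only [Finset.mem_filter, Finset.mem_univ, true_and]; tauto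
          · intro x hx hy
            simp only [Finset.mem_filter, Finset.mem_univ, true_and] at hx hy
            tauto
        have h3 := split_u t
        have h3' := split_u (t + 1)
        have h4 := split_v t
        have h4' := split_v (t + 1)
        have r1 := cntGe_rec parent
          (Finset.univ.filter (fun x => isDesc parent x u ∧ ¬ isDesc parent x v)) (Pseq i) t
        have r2 := cntGe_rec parent
          (Finset.univ.filter (fun x => isDesc parent x v ∧ ¬ isDesc parent x u)) (Pseq i) t
        omega
      -- three-way split
      have hsplitQ : ∀ (R : Finset (Fin n)) (t : ℕ), cntGe parent Finset.univ R t
          = cntGe parent (Finset.univ.filter (fun x => isDesc parent x u ∧ ¬ isDesc parent x v)) R t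
          + cntGe parent (Finset.univ.filter (fun x => isDesc parent x v ∧ ¬ isDesc parent x u)) R t
          + cntGe parent (Finset.univ.filter (fun x => isDesc parent x u ↔ isDesc parent x v)) R t := by
        intro R t
        apply cntGe_split3 parent
        · intro x; simp only [Finset.mem_filter, Finset.mem_univ, true_and]; tauto
        · intro x hx hy
          simp only [Finset.mem_filter, Finset.mem_univ, true_and] at hx hy
          tauto
        · intro x hx hy
          simp only [Finset.mem_filter, Finset.mem_univ, true_and] at hx hy
          tauto
        · intro x hx hy
          simp only [Finset.mem_filter, Finset.mem_univ, true_and] at hx hy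
          tauto
      -- exchange key identity
      have key_q : ∀ t, cntGe parent Finset.univ (insert u (Pstar.erase v)) (t + 1)
          + cntEq parent (Finset.univ.filter (fun x => isDesc parent x v ∧ ¬ isDesc parent x u)) Pstar (t + 1)
          = cntGe parent Finset.univ Pstar (t + 1)
          + cntEq parent (Finset.univ.filter (fun x => isDesc parent x u ∧ ¬ isDesc parent x v)) (Pseq i) t := by
        intro t
        have h1 := hsplitQ (insert u (Pstar.erase v)) (t + 1)
        have h2 := hsplitQ Pstar (t + 1)
        have hU1 : cntGe parent
            (Finset.univ.filter (fun x => isDesc parent x u ∧ ¬ isDesc parent x v))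
            (insert u (Pstar.erase v)) (t + 1)
            = cntGe parent
            (Finset.univ.filter (fun x => isDesc parent x u ∧ ¬ isDesc parent x v)) (Pseq i) t := by
          apply cntGe_eq_of parent
          intro x hx
          obtain ⟨hxu, hxv⟩ := (Finset.mem_filter.1 hx).2
          rw [(hfU x hxu hxv).1]
          omega
        have hU2 : ∀ s, cntGe parent
            (Finset.univ.filter (fun x => isDesc parent x u ∧ ¬ isDesc parent x v)) Pstar s
            = cntGe parent
            (Finset.univ.filter (fun x => isDesc parent x u ∧ ¬ isDesc parent x v)) (Pseq i) s := by
          intro s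
          apply cntGe_eq_of parent
          intro x hx
          obtain ⟨hxu, hxv⟩ := (Finset.mem_filter.1 hx).2
          rw [(hfU x hxu hxv).2]
        have hB1 : cntGe parent
            (Finset.univ.filter (fun x => isDesc parent x v ∧ ¬ isDesc parent x u))
            (insert u (Pstar.erase v)) (t + 1)
            = cntGe parent
            (Finset.univ.filter (fun x => isDesc parent x v ∧ ¬ isDesc parent x u)) Pstar (t + 1 + 1) := by
          apply cntGe_eq_of parent
          intro x hx
          obtain ⟨hxv, hxu⟩ := (Finset.mem_filter.1 hx).2
          have := (hfB x hxv hxu).1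
          omega
        have hR1 : cntGe parent
            (Finset.univ.filter (fun x => isDesc parent x u ↔ isDesc parent x v))
            (insert u (Pstar.erase v)) (t + 1)
            = cntGe parent
            (Finset.univ.filter (fun x => isDesc parent x u ↔ isDesc parent x v)) Pstar (t + 1) := by
          apply cntGe_eq_of parent
          intro x hx
          rw [hfR x (Finset.mem_filter.1 hx).2]
        have r1 := cntGe_rec parent
          (Finset.univ.filter (fun x => isDesc parent x u ∧ ¬ isDesc parent x v)) (Pseq i) t
        have r2 := cntGe_rec parent
          (Finset.univ.filter (fun x => isDesc parent x v ∧ ¬ isDesc parent x u)) Pstar (t + 1)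
        have h3 := hU2 (t + 1)
        omega
      -- assemble
      have hvmem : v ∈ leaves parent \ Pseq i := Finset.mem_sdiff.2 ⟨hv_leaves, hvP⟩
      have hcu : (insert u (Pseq i)).card ≤ ρ :=
        le_trans (Finset.card_insert_le _ _) (by omega)
      have hcv : (insert v (Pseq i)).card ≤ ρ :=
        le_trans (Finset.card_insert_le _ _) (by omega)
      have htop_g : topLe (fun t => cntGe parent Finset.univ (insert u (Pseq i)) t)
          (fun t => cntGe parent Finset.univ (insert v (Pseq i)) t) :=
        (lex_iff_topGe parent hcu hcv).1 (hgreedy v hvmem)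
      have hX0g : cntGe parent Finset.univ (insert u (Pseq i)) 0
          = cntGe parent Finset.univ (insert v (Pseq i)) 0 := by
        rw [cntGe_zero, cntGe_zero]
      have h_ce : topLe
          (fun t => cntEq parent (Finset.univ.filter (fun x => isDesc parent x u ∧ ¬ isDesc parent x v)) (Pseq i) t)
          (fun t => cntEq parent (Finset.univ.filter (fun x => isDesc parent x v ∧ ¬ isDesc parent x u)) (Pseq i) t) :=
        topLe_ptwise_of
          (X := fun t => cntGe parent Finset.univ (insert u (Pseq i)) t)
          (Y := fun t => cntGe parent Finset.univ (insert v (Pseq i)) t)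
          (f := fun t => cntEq parent (Finset.univ.filter (fun x => isDesc parent x u ∧ ¬ isDesc parent x v)) (Pseq i) t)
          (g := fun t => cntEq parent (Finset.univ.filter (fun x => isDesc parent x v ∧ ¬ isDesc parent x u)) (Pseq i) t)
          key_g hX0g htop_g
      have hPle : (Pseq i).card ≤ ρ := by omega
      have h_ab : topLe
          (fun t => cntGe parent (Finset.univ.filter (fun x => isDesc parent x u ∧ ¬ isDesc parent x v)) (Pseq i) t)
          (fun t => cntGe parent (Finset.univ.filter (fun x => isDesc parent x v ∧ ¬ isDesc parent x u)) (Pseq i) t) :=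
        topLe_cum
          (F := fun t => cntGe parent (Finset.univ.filter (fun x => isDesc parent x u ∧ ¬ isDesc parent x v)) (Pseq i) t)
          (G := fun t => cntGe parent (Finset.univ.filter (fun x => isDesc parent x v ∧ ¬ isDesc parent x u)) (Pseq i) t)
          (f := fun t => cntEq parent (Finset.univ.filter (fun x => isDesc parent x u ∧ ¬ isDesc parent x v)) (Pseq i) t)
          (g := fun t => cntEq parent (Finset.univ.filter (fun x => isDesc parent x v ∧ ¬ isDesc parent x u)) (Pseq i) t)
          (fun t => cntGe_rec parent _ _ t) (fun t => cntGe_rec parent _ _ t)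
          (ρ + 1) (cntGe_vanish parent _ hPle (by omega)) (cntGe_vanish parent _ hPle (by omega)) h_ce
      have hβγ : ∀ t, cntGe parent
          (Finset.univ.filter (fun x => isDesc parent x v ∧ ¬ isDesc parent x u)) (Pseq i) t
          ≤ cntGe parent
          (Finset.univ.filter (fun x => isDesc parent x v ∧ ¬ isDesc parent x u)) Pstar (t + 1) := by
        intro t
        apply cntGe_le_of parent
        intro x hx h
        obtain ⟨hxv, hxu⟩ := (Finset.mem_filter.1 hx).2
        have := (hfB x hxv hxu).2
        omega
      have hPscard_le : Pstar.card ≤ ρ := le_of_eq hPs_card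
      have h_ag : topLe
          (fun t => cntGe parent (Finset.univ.filter (fun x => isDesc parent x u ∧ ¬ isDesc parent x v)) (Pseq i) t)
          (fun t => cntGe parent (Finset.univ.filter (fun x => isDesc parent x v ∧ ¬ isDesc parent x u)) Pstar (t + 1)) :=
        topLe_exchange
          (α := fun t => cntGe parent (Finset.univ.filter (fun x => isDesc parent x u ∧ ¬ isDesc parent x v)) (Pseq i) t)
          (β := fun t => cntGe parent (Finset.univ.filter (fun x => isDesc parent x v ∧ ¬ isDesc parent x u)) (Pseq i) t)
          (γ := fun t => cntGe parent (Finset.univ.filter (fun x => isDesc parent x v ∧ ¬ isDesc parent x u)) Pstar t)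
          hβγ h_ab (ρ + 1)
          (fun t ht => ⟨cntGe_vanish parent _ hPle (by omega),
            cntGe_vanish parent _ hPscard_le (by omega)⟩)
      have h_cb : topLe
          (fun t => cntEq parent (Finset.univ.filter (fun x => isDesc parent x u ∧ ¬ isDesc parent x v)) (Pseq i) t)
          (fun t => cntEq parent (Finset.univ.filter (fun x => isDesc parent x v ∧ ¬ isDesc parent x u)) Pstar (t + 1)) :=
        topLe_of_cum
          (F := fun t => cntGe parent (Finset.univ.filter (fun x => isDesc parent x u ∧ ¬ isDesc parent x v)) (Pseq i) t)
          (G := fun t => cntGe parent (Finset.univ.filter (fun x => isDesc parent x v ∧ ¬ isDesc parent x u)) Pstar (t + 1))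
          (f := fun t => cntEq parent (Finset.univ.filter (fun x => isDesc parent x u ∧ ¬ isDesc parent x v)) (Pseq i) t)
          (g := fun t => cntEq parent (Finset.univ.filter (fun x => isDesc parent x v ∧ ¬ isDesc parent x u)) Pstar (t + 1))
          (fun t => cntGe_rec parent _ _ t)
          (fun t => cntGe_rec parent (Finset.univ.filter (fun x => isDesc parent x v ∧ ¬ isDesc parent x u)) Pstar (t + 1))
          h_ag
      have hX0q : cntGe parent Finset.univ (insert u (Pstar.erase v)) 0
          = cntGe parent Finset.univ Pstar 0 := by
        rw [cntGe_zero, cntGe_zero]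
      have htop_q : topLe (fun t => cntGe parent Finset.univ (insert u (Pstar.erase v)) t)
          (fun t => cntGe parent Finset.univ Pstar t) :=
        topLe_ptwise
          (X := fun t => cntGe parent Finset.univ (insert u (Pstar.erase v)) t)
          (Y := fun t => cntGe parent Finset.univ Pstar t)
          (f := fun t => cntEq parent (Finset.univ.filter (fun x => isDesc parent x u ∧ ¬ isDesc parent x v)) (Pseq i) t)
          (g := fun t => cntEq parent (Finset.univ.filter (fun x => isDesc parent x v ∧ ¬ isDesc parent x u)) Pstar (t + 1))
          key_q hX0q h_cb
      have hlexQ : lexLe (fagg parent ρ (insert u (Pstar.erase v))) (fagg parent ρ Pstar) :=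
        (lex_iff_topGe parent (le_of_eq hQcard) hPscard_le).2 htop_q
      exact ⟨insert u (Pstar.erase v), hQsub, hQcard,
        fun Q' hQ'1 hQ'2 => lexLe_trans hlexQ (hPs_opt Q' hQ'1 hQ'2), hPQ⟩
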